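/- arXiv:1612.07209 — 2 statements merged into one kernel-verified Lean document; each statement's English description precedes it below -/
import Mathlib

section
/- Let β > 0, κ > 0, α > 0, c = 36α²/(169β), and u(x,t) = (105α²/(169κβ))·sech⁴(½√(α/(13β))·(x − ct)). Then u satisfies the Kawahara equation u_t + κ u u_x + α u_xxx − β u_xxxxx = 0. -/
noncomputable def kawQ (y : ℝ) : ℝ := (Real.cosh y)⁻¹

lemma kawQ_hasDeriv (y : ℝ) : HasDerivAt kawQ (-(Real.sinh y) * kawQ y ^ 2) y := by
  have := (Real.hasDerivAt_cosh y).inv (Real.cosh_pos y).ne'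
  rw [show kawQ = (Real.cosh)⁻¹ from rfl]
  simpa [kawQ, div_eq_mul_inv, inv_pow, neg_mul] using this

noncomputable def kawF0 (y : ℝ) : ℝ := kawQ y ^ 4
noncomputable def kawF1 (y : ℝ) : ℝ := -4 * Real.sinh y * kawQ y ^ 5
noncomputable def kawF2 (y : ℝ) : ℝ := 16 * kawQ y ^ 4 - 20 * kawQ y ^ 6
noncomputable def kawF3 (y : ℝ) : ℝ := -64 * Real.sinh y * kawQ y ^ 5 + 120 * Real.sinh y * kawQ y ^ 7
noncomputable def kawF4 (y : ℝ) : ℝ := 256 * kawQ y ^ 4 - 1040 * kawQ y ^ 6 + 840 * kawQ y ^ 8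
noncomputable def kawF5 (y : ℝ) : ℝ := -1024 * Real.sinh y * kawQ y ^ 5 + 6240 * Real.sinh y * kawQ y ^ 7 - 6720 * Real.sinh y * kawQ y ^ 9

lemma kawhF0 (y : ℝ) : HasDerivAt kawF0 (kawF1 y) y := by
  have h := (kawQ_hasDeriv y).pow 4
  have e : kawF1 y = (4:ℕ) * kawQ y ^ (4-1) * (-(Real.sinh y) * kawQ y ^ 2) := by
    unfold kawF1; push_cast; ring
  rw [e]; exact h

lemma kawhF1 (y : ℝ) : HasDerivAt kawF1 (kawF2 y) y := by
  have h := ((Real.hasDerivAt_sinh y).mul ((kawQ_hasDeriv y).pow 5)).const_mul (-4)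
  have hc := (Real.cosh_pos y).ne'
  have hs : Real.sinh y ^ 2 = Real.cosh y ^ 2 - 1 := Real.sinh_sq y
  have h2 : kawF1 = fun z => -4 * (Real.sinh z * kawQ z ^ 5) := by
    funext z; unfold kawF1; ring
  have e : kawF2 y = -4 * (Real.cosh y * kawQ y ^ 5 + Real.sinh y * ((5:ℕ) * kawQ y ^ (5-1) * (-(Real.sinh y) * kawQ y ^ 2))) := by
    unfold kawF2 kawQ
    field_simp
    rw [hs, show (5:ℕ)-1 = 4 from rfl]; field_simp; ring
  rw [h2, e]; exact h

lemma kawhF2 (y : ℝ) : HasDerivAt kawF2 (kawF3 y) y := by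
  have h := (((kawQ_hasDeriv y).pow 4).const_mul 16).sub (((kawQ_hasDeriv y).pow 6).const_mul 20)
  have h2 : kawF2 = fun z => 16 * kawQ z ^ 4 - 20 * kawQ z ^ 6 := by
    funext z; unfold kawF2; ring
  have e : kawF3 y = 16 * ((4:ℕ) * kawQ y ^ (4-1) * (-(Real.sinh y) * kawQ y ^ 2)) - 20 * ((6:ℕ) * kawQ y ^ (6-1) * (-(Real.sinh y) * kawQ y ^ 2)) := by
    unfold kawF3; push_cast; ring
  rw [h2, e]; exact h

lemma kawhF3 (y : ℝ) : HasDerivAt kawF3 (kawF4 y) y := by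
  have h := (((Real.hasDerivAt_sinh y).mul ((kawQ_hasDeriv y).pow 5)).const_mul (-64)).add
    (((Real.hasDerivAt_sinh y).mul ((kawQ_hasDeriv y).pow 7)).const_mul 120)
  have hc := (Real.cosh_pos y).ne'
  have hs : Real.sinh y ^ 2 = Real.cosh y ^ 2 - 1 := Real.sinh_sq y
  have h2 : kawF3 = fun z => -64 * (Real.sinh z * kawQ z ^ 5) + 120 * (Real.sinh z * kawQ z ^ 7) := by
    funext z; unfold kawF3; ring
  have e : kawF4 y = -64 * (Real.cosh y * kawQ y ^ 5 + Real.sinh y * ((5:ℕ) * kawQ y ^ (5-1) * (-(Real.sinh y) * kawQ y ^ 2)))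
      + 120 * (Real.cosh y * kawQ y ^ 7 + Real.sinh y * ((7:ℕ) * kawQ y ^ (7-1) * (-(Real.sinh y) * kawQ y ^ 2))) := by
    unfold kawF4 kawQ
    field_simp
    rw [hs, show (5:ℕ)-1 = 4 from rfl, show (7:ℕ)-1 = 6 from rfl]; field_simp; ring
  rw [h2, e]; exact h

lemma kawhF4 (y : ℝ) : HasDerivAt kawF4 (kawF5 y) y := by
  have h := ((((kawQ_hasDeriv y).pow 4).const_mul 256).sub (((kawQ_hasDeriv y).pow 6).const_mul 1040)).add
    (((kawQ_hasDeriv y).pow 8).const_mul 840)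
  have h2 : kawF4 = fun z => 256 * kawQ z ^ 4 - 1040 * kawQ z ^ 6 + 840 * kawQ z ^ 8 := by
    funext z; unfold kawF4; ring
  have e : kawF5 y = 256 * ((4:ℕ) * kawQ y ^ (4-1) * (-(Real.sinh y) * kawQ y ^ 2))
      - 1040 * ((6:ℕ) * kawQ y ^ (6-1) * (-(Real.sinh y) * kawQ y ^ 2))
      + 840 * ((8:ℕ) * kawQ y ^ (8-1) * (-(Real.sinh y) * kawQ y ^ 2)) := by
    unfold kawF5; push_cast; ring
  rw [h2, e]; exact h

lemma kawChain (G G' : ℝ → ℝ) (hG : ∀ y, HasDerivAt G (G' y) y) (a k b : ℝ) :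
    deriv (fun x => a * G (k * x + b)) = fun x => (a * k) * G' (k * x + b) := by
  funext x
  have h1 : HasDerivAt (fun x : ℝ => k * x + b) k x := by
    simpa using ((hasDerivAt_id x).const_mul k).add_const b
  have h2 := ((hG (k * x + b)).comp x h1).const_mul a
  simpa [mul_comm, mul_assoc] using h2.deriv

/-- the sech⁴ soliton solves the Kawahara equation. -/
theorem stmt_9 (α β κ c : ℝ) (hβ : 0 < β) (hκ : 0 < κ) (hα : 0 < α)
    (hc : c = 36 * α^2 / (169 * β))
    (u : ℝ → ℝ → ℝ)
    (hu : ∀ x t : ℝ, u x t = (105 * α^2 / (169 * κ * β)) *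
      (1 / Real.cosh ((1/2) * Real.sqrt (α / (13 * β)) * (x - c * t)))^4) :
    ∀ x t : ℝ,
      deriv (fun t' => u x t') t
        + κ * u x t * deriv (fun x' => u x' t) x
        + α * iteratedDeriv 3 (fun x' => u x' t) x
        - β * iteratedDeriv 5 (fun x' => u x' t) x = 0 := by
  intro x t
  set k := (1/2) * Real.sqrt (α / (13 * β)) with hk
  set A := 105 * α^2 / (169 * κ * β) with hA
  set b := -(k * (c * t)) with hb
  have hfunx : (fun x' => u x' t) = fun x' => A * kawF0 (k * x' + b) := by
    funext x'
    rw [hu, show k * ((x' : ℝ) - c * t) = k * x' + b from by rw [hb]; ring]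
    unfold kawF0 kawQ
    rw [one_div]
  have hu0 : u x t = A * kawF0 (k * x + b) := congrFun hfunx x
  have hfunt : (fun t' => u x t') = fun t' => A * kawF0 ((-(k * c)) * t' + k * x) := by
    funext t'
    rw [hu, show k * ((x : ℝ) - c * t') = (-(k * c)) * t' + k * x from by ring]
    unfold kawF0 kawQ
    rw [one_div]
  have e_t : deriv (fun t' => u x t') t = (A * (-(k * c))) * kawF1 (k * x + b) := by
    simp only [hfunt, kawChain _ _ kawhF0]
    rw [show (-(k * c)) * t + k * x = k * x + b from by rw [hb]; ring]
  have e_x : deriv (fun x' => u x' t) = fun x' => (A * k) * kawF1 (k * x' + b) := by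
    rw [hfunx]; exact kawChain _ _ kawhF0 A k b
  have e3 : iteratedDeriv 3 (fun x' => u x' t) = fun x' => (((A * k) * k) * k) * kawF3 (k * x' + b) := by
    rw [show (3:ℕ) = 2 + 1 from rfl, iteratedDeriv_succ,
      show (2:ℕ) = 1 + 1 from rfl, iteratedDeriv_succ, iteratedDeriv_one,
      hfunx, kawChain _ _ kawhF0, kawChain _ _ kawhF1, kawChain _ _ kawhF2]
  have e5 : iteratedDeriv 5 (fun x' => u x' t) = fun x' => (((((A * k) * k) * k) * k) * k) * kawF5 (k * x' + b) := by
    rw [show (5:ℕ) = 4 + 1 from rfl, iteratedDeriv_succ,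
      show (4:ℕ) = 3 + 1 from rfl, iteratedDeriv_succ,
      show (3:ℕ) = 2 + 1 from rfl, iteratedDeriv_succ,
      show (2:ℕ) = 1 + 1 from rfl, iteratedDeriv_succ, iteratedDeriv_one,
      hfunx, kawChain _ _ kawhF0, kawChain _ _ kawhF1, kawChain _ _ kawhF2,
      kawChain _ _ kawhF3, kawChain _ _ kawhF4]
  have hw : 13 * β * Real.sqrt (α / (13 * β)) ^ 2 = α := by
    rw [Real.sq_sqrt (by positivity)]
    field_simp
  have hch := (Real.cosh_pos (k * x + b)).ne'
  rw [e_t, hu0, e_x, e3, e5]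
  simp only
  unfold kawF0 kawF1 kawF3 kawF5 kawQ
  rw [hc, hA]
  field_simp
  have hk2 : k^2 = α / (52 * β) := by
    rw [hk, mul_pow, Real.sq_sqrt (by positivity)]; field_simp; ring
  rw [show k^4 = (k^2)^2 by ring, hk2]
  field_simp
  ring
end

section
/- Let β > 0, κ > 0, α < 0, c = 36α²/(169β), and u(x,t) = (105α²/(169κβ))·csc⁴(½√(−α/(13β))·(x−ct)). Then u satisfies the Kawahara equation u_t + κ u u_x + α u_xxx − β u_xxxxx = 0 at all points where it is defined (i.e., where the sine in the argument is nonzero). -/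
noncomputable section KawaharaCsc4Aux

def KG0 (C a b x : ℝ) : ℝ := C / Real.sin (a*x+b)^4
def KG1 (C a b x : ℝ) : ℝ := -4*a*C * Real.cos (a*x+b) / Real.sin (a*x+b)^5
def KG2 (C a b x : ℝ) : ℝ :=
  C*a^2 * (20*Real.cos (a*x+b)^2 + 4*Real.sin (a*x+b)^2) / Real.sin (a*x+b)^6
def KG3 (C a b x : ℝ) : ℝ :=
  C*a^3 * (Real.cos (a*x+b) * ((-56)*Real.sin (a*x+b)^2 + (-120)*Real.cos (a*x+b)^2))
    / Real.sin (a*x+b)^7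
def KG4 (C a b x : ℝ) : ℝ :=
  C*a^4 * (56*(Real.sin (a*x+b)^2*Real.sin (a*x+b)^2)
    + 640*(Real.sin (a*x+b)^2*Real.cos (a*x+b)^2)
    + 840*(Real.cos (a*x+b)^2*Real.cos (a*x+b)^2)) / Real.sin (a*x+b)^8
def KG5 (C a b x : ℝ) : ℝ :=
  C*a^5 * (Real.cos (a*x+b) * ((-1504)*(Real.sin (a*x+b)^2*Real.sin (a*x+b)^2)
    + (-7200)*(Real.sin (a*x+b)^2*Real.cos (a*x+b)^2)
    + (-6720)*(Real.cos (a*x+b)^2*Real.cos (a*x+b)^2))) / Real.sin (a*x+b)^9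

lemma khasDerivAt_sin_lin (a b x : ℝ) :
    HasDerivAt (fun x => Real.sin (a*x+b)) (Real.cos (a*x+b) * a) x := by
  have h : HasDerivAt (fun x : ℝ => a*x+b) a x := by
    simpa using ((hasDerivAt_id x).const_mul a).add_const b
  exact (Real.hasDerivAt_sin (a*x+b)).comp x h

lemma khasDerivAt_cos_lin (a b x : ℝ) :
    HasDerivAt (fun x => Real.cos (a*x+b)) (-Real.sin (a*x+b) * a) x := by
  have h : HasDerivAt (fun x : ℝ => a*x+b) a x := by
    simpa using ((hasDerivAt_id x).const_mul a).add_const b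
  exact (Real.hasDerivAt_cos (a*x+b)).comp x h

lemma kstepAux {f : ℝ → ℝ} {v w x : ℝ} (H : HasDerivAt f v x) (hv : v = w) :
    HasDerivAt f w x := hv ▸ H

lemma kstep01 (C a b x : ℝ) (h : Real.sin (a*x+b) ≠ 0) :
    HasDerivAt (KG0 C a b) (KG1 C a b x) x := by
  refine kstepAux ((hasDerivAt_const x C).div ((khasDerivAt_sin_lin a b x).pow 4)
    (pow_ne_zero 4 h)) ?_
  simp only [KG1]
  field_simp
  ring

lemma kstep12 (C a b x : ℝ) (h : Real.sin (a*x+b) ≠ 0) :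
    HasDerivAt (KG1 C a b) (KG2 C a b x) x := by
  refine kstepAux (((khasDerivAt_cos_lin a b x).const_mul (-4*a*C)).div
    ((khasDerivAt_sin_lin a b x).pow 5) (pow_ne_zero 5 h)) ?_
  simp only [KG2]
  field_simp
  ring

lemma kstep23 (C a b x : ℝ) (h : Real.sin (a*x+b) ≠ 0) :
    HasDerivAt (KG2 C a b) (KG3 C a b x) x := by
  have hs := khasDerivAt_sin_lin a b x
  have hco := khasDerivAt_cos_lin a b x
  refine kstepAux (((((hco.pow 2).const_mul 20).add ((hs.pow 2).const_mul 4)).const_mul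
    (C*a^2)).div ((khasDerivAt_sin_lin a b x).pow 6) (pow_ne_zero 6 h)) ?_
  simp only [KG3, Pi.add_apply, Pi.mul_apply, Pi.pow_apply]
  field_simp
  ring

lemma kstep34 (C a b x : ℝ) (h : Real.sin (a*x+b) ≠ 0) :
    HasDerivAt (KG3 C a b) (KG4 C a b x) x := by
  have hs := khasDerivAt_sin_lin a b x
  have hco := khasDerivAt_cos_lin a b x
  refine kstepAux (((hco.mul (((hs.pow 2).const_mul (-56)).add
    ((hco.pow 2).const_mul (-120)))).const_mul (C*a^3)).div
    ((khasDerivAt_sin_lin a b x).pow 7) (pow_ne_zero 7 h)) ?_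
  simp only [KG4, Pi.add_apply, Pi.mul_apply, Pi.pow_apply]
  field_simp
  ring

lemma kstep45 (C a b x : ℝ) (h : Real.sin (a*x+b) ≠ 0) :
    HasDerivAt (KG4 C a b) (KG5 C a b x) x := by
  have hs := khasDerivAt_sin_lin a b x
  have hco := khasDerivAt_cos_lin a b x
  refine kstepAux (((((((hs.pow 2).mul (hs.pow 2)).const_mul 56).add
    (((hs.pow 2).mul (hco.pow 2)).const_mul 640)).add
     (((hco.pow 2).mul (hco.pow 2)).const_mul 840)).const_mul (C*a^4)).div
    ((khasDerivAt_sin_lin a b x).pow 8) (pow_ne_zero 8 h)) ?_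
  simp only [KG5, Pi.add_apply, Pi.mul_apply, Pi.pow_apply]
  field_simp
  ring
lemma kiter (C a b : ℝ) {x : ℝ} (h : Real.sin (a*x+b) ≠ 0) :
    iteratedDeriv 3 (KG0 C a b) x = KG3 C a b x ∧
    iteratedDeriv 5 (KG0 C a b) x = KG5 C a b x := by
  have hopen : IsOpen {z : ℝ | Real.sin (a*z+b) ≠ 0} := by
    have hcont : Continuous fun z : ℝ => Real.sin (a*z+b) :=
      Real.continuous_sin.comp ((continuous_const.mul continuous_id).add continuous_const)
    exact isOpen_ne.preimage hcont
  have key : ∀ (f g fd : ℝ → ℝ),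
      (∀ z ∈ {z : ℝ | Real.sin (a*z+b) ≠ 0}, f z = g z) →
      (∀ z ∈ {z : ℝ | Real.sin (a*z+b) ≠ 0}, HasDerivAt g (fd z) z) →
      ∀ z ∈ {z : ℝ | Real.sin (a*z+b) ≠ 0}, deriv f z = fd z := by
    intro f g fd hfg hg z hz
    have hev : f =ᶠ[nhds z] g := Filter.eventuallyEq_of_mem (hopen.mem_nhds hz) hfg
    rw [hev.deriv_eq, (hg z hz).deriv]
  have e1 : ∀ z ∈ {z : ℝ | Real.sin (a*z+b) ≠ 0},
      iteratedDeriv 1 (KG0 C a b) z = KG1 C a b z := by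
    intro z hz
    rw [iteratedDeriv_one]
    exact (kstep01 C a b z hz).deriv
  have e2 : ∀ z ∈ {z : ℝ | Real.sin (a*z+b) ≠ 0},
      iteratedDeriv 2 (KG0 C a b) z = KG2 C a b z := by
    intro z hz
    rw [show (2:ℕ) = 1+1 from rfl, iteratedDeriv_succ]
    exact key _ _ _ e1 (fun w hw => kstep12 C a b w hw) z hz
  have e3 : ∀ z ∈ {z : ℝ | Real.sin (a*z+b) ≠ 0},
      iteratedDeriv 3 (KG0 C a b) z = KG3 C a b z := by
    intro z hz
    rw [show (3:ℕ) = 2+1 from rfl, iteratedDeriv_succ]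
    exact key _ _ _ e2 (fun w hw => kstep23 C a b w hw) z hz
  have e4 : ∀ z ∈ {z : ℝ | Real.sin (a*z+b) ≠ 0},
      iteratedDeriv 4 (KG0 C a b) z = KG4 C a b z := by
    intro z hz
    rw [show (4:ℕ) = 3+1 from rfl, iteratedDeriv_succ]
    exact key _ _ _ e3 (fun w hw => kstep34 C a b w hw) z hz
  have e5 : ∀ z ∈ {z : ℝ | Real.sin (a*z+b) ≠ 0},
      iteratedDeriv 5 (KG0 C a b) z = KG5 C a b z := by
    intro z hz
    rw [show (5:ℕ) = 4+1 from rfl, iteratedDeriv_succ]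
    exact key _ _ _ e4 (fun w hw => kstep45 C a b w hw) z hz
  exact ⟨e3 x h, e5 x h⟩


end KawaharaCsc4Aux

/-- the csc⁴ solution of the Kawahara equation (α < 0). -/
theorem stmt_14 (α β κ c : ℝ) (hβ : 0 < β) (hκ : 0 < κ) (hα : α < 0)
    (hc : c = 36 * α^2 / (169 * β))
    (u : ℝ → ℝ → ℝ)
    (hu : ∀ x t : ℝ, u x t = (105 * α^2 / (169 * κ * β)) *
      (1 / Real.sin ((1/2) * Real.sqrt (-α / (13 * β)) * (x - c * t)))^4) :
    ∀ x t : ℝ,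
      Real.sin ((1/2) * Real.sqrt (-α / (13 * β)) * (x - c * t)) ≠ 0 →
      deriv (fun t' => u x t') t
        + κ * u x t * deriv (fun x' => u x' t) x
        + α * iteratedDeriv 3 (fun x' => u x' t) x
        - β * iteratedDeriv 5 (fun x' => u x' t) x = 0 := by
  intro x t hsin
  obtain ⟨k, hkdef⟩ : ∃ k' : ℝ, k' = (1/2) * Real.sqrt (-α / (13 * β)) := ⟨_, rfl⟩
  rw [← hkdef] at hsin
  rw [show (∀ x t : ℝ, u x t = (105 * α^2 / (169 * κ * β)) *
      (1 / Real.sin ((1/2) * Real.sqrt (-α / (13 * β)) * (x - c * t)))^4) =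
    (∀ x t : ℝ, u x t = (105 * α^2 / (169 * κ * β)) *
      (1 / Real.sin (k * (x - c * t)))^4) from by rw [hkdef]] at hu
  have hβ' : (β:ℝ) ≠ 0 := ne_of_gt hβ
  have hκ' : κ ≠ 0 := ne_of_gt hκ
  have harg : (0:ℝ) ≤ -α / (13*β) := le_of_lt (div_pos (by linarith) (by linarith))
  have hk2 : k^2 = -α/(52*β) := by
    rw [hkdef, mul_pow, Real.sq_sqrt harg]
    field_simp
    ring
  have hαk : α = -52*β*k^2 := by
    rw [hk2]
    field_simp
  have hck : c = 576*β*k^4 := by rw [hc, hαk]; field_simp; ring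
  obtain ⟨CC, hCC⟩ : ∃ C' : ℝ, C' = 1680*β*k^4/κ := ⟨_, rfl⟩
  have hCval : 105 * α^2 / (169 * κ * β) = CC := by
    rw [hCC, hαk]; field_simp; ring
  have hux : (fun x' => u x' t) = KG0 CC k (-(k*(c*t))) := by
    funext z
    rw [hu, hCval]
    simp only [KG0]
    rw [show k*z + -(k*(c*t)) = k*(z - c*t) from by ring]
    ring
  have hut : (fun t' => u x t') = KG0 CC (-(k*c)) (k*x) := by
    funext z
    rw [hu, hCval]
    simp only [KG0]
    rw [show -(k*c)*z + k*x = k*(x - c*z) from by ring]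
    ring
  have huval : u x t = CC / Real.sin (k*(x - c*t))^4 := by
    rw [hu, hCval]
    ring
  have hsin' : Real.sin (k*x + -(k*(c*t))) ≠ 0 := by
    rw [show k*x + -(k*(c*t)) = k*(x - c*t) from by ring]; exact hsin
  have hsint : Real.sin (-(k*c)*t + k*x) ≠ 0 := by
    rw [show -(k*c)*t + k*x = k*(x - c*t) from by ring]; exact hsin
  obtain ⟨h3, h5⟩ := kiter CC k (-(k*(c*t))) hsin'
  rw [huval, hut, hux, (kstep01 CC (-(k*c)) (k*x) t hsint).deriv,
    (kstep01 CC k (-(k*(c*t))) x hsin').deriv, h3, h5]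
  simp only [KG1, KG3, KG5]
  rw [show -(k*c)*t + k*x = k*(x - c*t) from by ring,
      show k*x + -(k*(c*t)) = k*(x - c*t) from by ring]
  have hpyth := Real.sin_sq_add_cos_sq (k*(x - c*t))
  obtain ⟨s, hseq⟩ : ∃ s' : ℝ, s' = Real.sin (k*(x - c*t)) := ⟨_, rfl⟩
  obtain ⟨co, hcoeq⟩ : ∃ c' : ℝ, c' = Real.cos (k*(x - c*t)) := ⟨_, rfl⟩
  rw [← hseq, ← hcoeq]
  rw [← hseq] at hsin
  rw [← hseq, ← hcoeq] at hpyth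
  have hco2 : co^2 = 1 - s^2 := by linarith
  rw [hco2, hαk, hck, hCC]
  field_simp
  ring
end
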